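/- Let k be a field of characteristic p > 2 with p ≡ 2 (mod n), n ≥ 3, and let a = (p-2)/n. Let f = x_1^{n-1} + ... + x_n^{n-1} in k[x_1,...,x_n]. Then for all sufficiently large e, f^{p^e - 2p^{e-1} + 1} ∉ (x_1^{p^e}, ..., x_n^{p^e}). -/

import Mathlib

open MvPolynomial

theorem fermat_nu_lower_bound (k : Type*) [Field k] (p : ℕ) [CharP k p]
    (hp : 2 < p) (n : ℕ) (hn : 3 ≤ n) (hmod : p % n = 2) :
    ∃ E : ℕ, ∀ e ≥ E,
      (∑ i : Fin n, (X i : MvPolynomial (Fin n) k) ^ (n - 1)) ^ (p ^ e - 2 * p ^ (e - 1) + 1) ∉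
        Ideal.span (Set.range fun i : Fin n => (X i : MvPolynomial (Fin n) k) ^ (p ^ e)) := by
  classical
  have hprime : p.Prime := Or.resolve_right (CharP.char_is_prime_or_zero k p) (by omega)
  haveI : Fact p.Prime := ⟨hprime⟩
  set d := n - 1 with hdd
  have hd0 : 0 < d := by omega
  obtain ⟨a, ha⟩ : ∃ a, n * a + 2 = p :=
    ⟨p / n, by have h := Nat.div_add_mod p n; omega⟩
  have hnp : n < p := by
    rcases lt_trichotomy p n with h | h | h
    · rw [Nat.mod_eq_of_lt h] at hmod; omega
    · rw [h, Nat.mod_self] at hmod; omega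
    · exact h
  have ha1 : 1 ≤ a := by
    rcases Nat.eq_zero_or_pos a with h | h
    · rw [h] at ha; omega
    · exact h
  have hda : d * a = p - 2 - a := by
    have h1 : d * a + a = n * a := by
      rw [hdd, Nat.sub_one_mul]
      have : a ≤ n * a := Nat.le_mul_of_pos_left a (by omega)
      omega
    omega
  refine ⟨2, fun e he => ?_⟩
  set q' := p ^ (e - 1) with hq'
  have hq'p : p ≤ q' := by
    calc p = p ^ 1 := (pow_one p).symm
    _ ≤ p ^ (e - 1) := Nat.pow_le_pow_right (by omega) (by omega)
  have hq'2 : 2 ≤ q' := by omega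
  have hq : p ^ e = q' * p := by
    rw [hq', ← pow_succ, Nat.sub_add_cancel (by omega : 1 ≤ e)]
  have hN : p ^ e - 2 * p ^ (e - 1) + 1 = (p - 2) * q' + 1 := by
    rw [hq, ← hq', Nat.sub_mul, mul_comm q' p]
  set i0 : Fin n := ⟨0, by omega⟩ with hi0
  set w : (Fin n → ℕ) → (Fin n →₀ ℕ) :=
    fun kk => Finsupp.equivFunOnFinite.symm (fun i => d * q' * kk i) with hw
  have hwapp : ∀ (kk : Fin n → ℕ) (i : Fin n), w kk i = d * q' * kk i := fun _ _ => rfl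
  set k₀ : Fin n → ℕ := fun _ => a with hk₀
  set α : Fin n →₀ ℕ := w k₀ + Finsupp.single i0 d with hα
  have hαapp : ∀ i : Fin n, α i = d * q' * a + (if i0 = i then d else 0) := by
    intro i
    rw [hα, Finsupp.add_apply, hwapp, Finsupp.single_apply]
  -- the multinomial coefficient
  set M : ℕ := Nat.multinomial Finset.univ k₀ with hM
  have hMk : (M : k) ≠ 0 := by
    intro h0
    rw [CharP.cast_eq_zero_iff k p] at h0
    have hspec := Nat.multinomial_spec (Finset.univ : Finset (Fin n)) k₀
    have hsum : ∑ _i : Fin n, a = p - 2 := by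
      rw [Finset.sum_const, Finset.card_univ, Fintype.card_fin, smul_eq_mul]; omega
    rw [hsum] at hspec
    have hdvd : p ∣ Nat.factorial (p - 2) := by
      rw [← hspec]
      exact Dvd.dvd.mul_left h0 _
    have hle := (Nat.Prime.dvd_factorial hprime).mp hdvd
    omega
  have hmono : ∀ kk : Fin n → ℕ,
      ∏ i : Fin n, (X i : MvPolynomial (Fin n) k) ^ (d * q' * kk i) = monomial (w kk) 1 := by
    intro kk
    rw [← MvPolynomial.prod_X_pow_eq_monomial]
    refine (Finset.prod_subset (Finset.subset_univ _) ?_).symm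
    intro i _ hi
    rw [Finsupp.notMem_support_iff] at hi
    have hi' : d * q' * kk i = 0 := hi
    show (X i : MvPolynomial (Fin n) k) ^ (d * q' * kk i) = 1
    rw [hi', pow_zero]
  -- main expansion
  have hf : (∑ i : Fin n, (X i : MvPolynomial (Fin n) k) ^ d) ^ ((p - 2) * q' + 1)
      = ∑ kk ∈ Finset.piAntidiag Finset.univ (p - 2), ∑ j : Fin n,
          monomial (w kk + Finsupp.single j d) ((Nat.multinomial Finset.univ kk : k)) := by
    rw [pow_add, pow_one, mul_comm (p - 2) q', pow_mul, hq', sum_pow_char_pow]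
    simp only [← pow_mul]
    rw [Finset.sum_pow_eq_sum_piAntidiag, Finset.sum_mul]
    refine Finset.sum_congr rfl fun kk _ => ?_
    simp only [← pow_mul, ← hq', hmono kk]
    rw [Finset.mul_sum]
    refine Finset.sum_congr rfl fun j _ => ?_
    rw [mul_assoc, X_pow_eq_monomial, monomial_mul, one_mul,
      ← map_natCast (C : k →+* MvPolynomial (Fin n) k), C_mul_monomial, mul_one]
  have hk₀mem : k₀ ∈ Finset.piAntidiag Finset.univ (p - 2) := by
    rw [Finset.mem_piAntidiag]
    refine ⟨?_, fun i _ => Finset.mem_univ i⟩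
    rw [Finset.sum_const, Finset.card_univ, Fintype.card_fin, smul_eq_mul]; omega
  have hdq0 : 0 < d * q' := Nat.mul_pos hd0 (by omega)
  -- coefficient computation
  have hcoeff : coeff α ((∑ i : Fin n, (X i : MvPolynomial (Fin n) k) ^ d) ^ ((p - 2) * q' + 1))
      = (M : k) := by
    rw [hf, MvPolynomial.coeff_sum]
    rw [Finset.sum_eq_single_of_mem k₀ hk₀mem]
    · rw [MvPolynomial.coeff_sum]
      rw [Finset.sum_eq_single_of_mem i0 (Finset.mem_univ i0)]
      · rw [coeff_monomial, if_pos rfl, hM]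
      · intro j _ hj
        rw [coeff_monomial, if_neg]
        intro hcon
        have := DFunLike.congr_fun hcon j
        rw [Finsupp.add_apply, hwapp, Finsupp.single_apply, if_pos rfl, hαapp,
          if_neg (fun h => hj (h.symm))] at this
        have hk0j : k₀ j = a := rfl
        rw [hk0j] at this
        omega
    · intro kk hkk hne
      rw [MvPolynomial.coeff_sum]
      refine Finset.sum_eq_zero fun j _ => ?_
      rw [coeff_monomial, if_neg]
      intro hcon
      have hall : ∀ i : Fin n, d * q' * kk i + (if j = i then d else 0)
          = d * q' * a + (if i0 = i then d else 0) := by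
        intro i
        have := DFunLike.congr_fun hcon i
        rw [Finsupp.add_apply, hwapp, Finsupp.single_apply, hαapp] at this
        exact this
      by_cases hji : j = i0
      · subst hji
        apply hne
        funext i
        have h2 : d * q' * kk i = d * q' * a := Nat.add_right_cancel (hall i)
        exact Nat.eq_of_mul_eq_mul_left hdq0 h2
      · have := hall j
        rw [if_pos rfl, if_neg (fun h => hji h.symm), add_zero] at this
        have h2 : d * (q' * kk j + 1) = d * (q' * a) := by
          rw [Nat.mul_add, mul_one, ← mul_assoc, ← mul_assoc]; omega
        have h3 := Nat.eq_of_mul_eq_mul_left hd0 h2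
        have h4 : q' ∣ q' * kk j + 1 := h3 ▸ dvd_mul_right q' a
        have h5 : q' ∣ 1 := (Nat.dvd_add_right (dvd_mul_right q' (kk j))).mp h4
        have := Nat.le_of_dvd one_pos h5
        omega
  -- the support element
  have hαsupp : α ∈ ((∑ i : Fin n, (X i : MvPolynomial (Fin n) k) ^ d)
      ^ ((p - 2) * q' + 1)).support := by
    rw [mem_support_iff, hcoeff]
    exact hMk
  -- bound on α
  have hbound : ∀ i : Fin n, α i < p ^ e := by
    intro i
    have h1 : α i ≤ d * q' * a + d := by
      rw [hαapp]
      split <;> omega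
    have h2 : d * q' * a = (p - 2 - a) * q' := by
      rw [mul_comm d q', mul_assoc, hda, mul_comm]
    have h3 : (p - 2 - a) * q' + q' ≤ (p - 3) * q' + q' :=
      Nat.add_le_add_right (Nat.mul_le_mul_right q' (by omega)) q'
    have h4 : (p - 3) * q' + q' = (p - 2) * q' := by
      have : p - 3 + 1 = p - 2 := by omega
      rw [← this, Nat.add_mul, one_mul]
    have h5 : (p - 2) * q' < p * q' :=
      (Nat.mul_lt_mul_right (show 0 < q' by omega)).mpr (by omega)
    have h6 : d < q' := by omega
    rw [hq, mul_comm q' p]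
    omega
  rw [hN]
  intro hmem
  have hset : (Set.range fun i : Fin n => (X i : MvPolynomial (Fin n) k) ^ (p ^ e))
      = (fun s => monomial s (1 : k)) ''
        (Set.range fun i : Fin n => Finsupp.single i (p ^ e)) := by
    have hcomp : (fun i : Fin n => (X i : MvPolynomial (Fin n) k) ^ (p ^ e))
        = (fun s => monomial s (1 : k)) ∘ (fun i : Fin n => Finsupp.single i (p ^ e)) := by
      funext i
      exact X_pow_eq_monomial
    rw [hcomp, Set.range_comp]
  rw [hset, mem_ideal_span_monomial_image] at hmem
  obtain ⟨si, hsi, hle⟩ := hmem α hαsupp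
  obtain ⟨i, rfl⟩ := hsi
  rw [Finsupp.single_le_iff] at hle
  exact absurd hle (not_le.mpr (hbound i))
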